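/- Suppose e₁, e₂, k̃, l̃, w̃ : ℝ → ℝ are differentiable at t and satisfy de₁/dt = −a_m·e₁ + L·e₂, de₂/dt = −(a_m + L)·e₂ − b·k̃·y + b·l̃·r + b·w̃, dk̃/dt = sgn(b)·y·γ₁·m₂·e₂, dl̃/dt = −sgn(b)·r·γ₂·m₂·e₂, dw̃/dt = −sgn(b)·γ₃·m₂·e₂ at time t (for given values L, y, r at time t). Then the derivative of V(t) := ½·m₁·e₁(t)² + ½·m₂·e₂(t)² + (|b|/(2γ₁))·k̃(t)² + (|b|/(2γ₂))·l̃(t)² + (|b|/(2γ₃))·w̃(t)² at t equals −(a_m·m₁·e₁(t)² − L·m₁·e₁(t)·e₂(t) + (L + a_m)·m₂·e₂(t)²). -/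

import Mathlib

/-- Derivative of the Lyapunov function (unblended case).
With the error dynamics and adaptation laws holding at `t`, the derivative of
`V` at `t` equals `−(a_m·m₁·e₁² − L·m₁·e₁·e₂ + (L + a_m)·m₂·e₂²)`. -/
theorem stmt_4
    (aₘ b m₁ m₂ γ₁ γ₂ γ₃ L y r t : ℝ)
    (e₁ e₂ kt lt wt : ℝ → ℝ)
    (ham : 0 < aₘ) (hb : b ≠ 0)
    (hm₁ : 0 < m₁) (hm₂ : 0 < m₂)
    (hγ₁ : 0 < γ₁) (hγ₂ : 0 < γ₂) (hγ₃ : 0 < γ₃)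
    (hd1 : HasDerivAt e₁ (-aₘ * e₁ t + L * e₂ t) t)
    (hd2 : HasDerivAt e₂
      (-(aₘ + L) * e₂ t - b * kt t * y + b * lt t * r + b * wt t) t)
    (hd3 : HasDerivAt kt (Real.sign b * y * γ₁ * m₂ * e₂ t) t)
    (hd4 : HasDerivAt lt (-(Real.sign b) * r * γ₂ * m₂ * e₂ t) t)
    (hd5 : HasDerivAt wt (-(Real.sign b) * γ₃ * m₂ * e₂ t) t) :
    HasDerivAt (fun s => (1/2) * m₁ * (e₁ s) ^ 2 + (1/2) * m₂ * (e₂ s) ^ 2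
        + (|b| / (2 * γ₁)) * (kt s) ^ 2 + (|b| / (2 * γ₂)) * (lt s) ^ 2
        + (|b| / (2 * γ₃)) * (wt s) ^ 2)
      (-(aₘ * m₁ * (e₁ t) ^ 2 - L * m₁ * e₁ t * e₂ t
          + (L + aₘ) * m₂ * (e₂ t) ^ 2)) t := by
  have h := (((((hd1.pow 2).const_mul ((1/2) * m₁)).add ((hd2.pow 2).const_mul ((1/2) * m₂))).add
      ((hd3.pow 2).const_mul (|b| / (2 * γ₁)))).add
      ((hd4.pow 2).const_mul (|b| / (2 * γ₂)))).add
      ((hd5.pow 2).const_mul (|b| / (2 * γ₃)))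
  refine h.congr_deriv ?_
  rcases hb.lt_or_gt with hneg | hpos
  · rw [Real.sign_of_neg hneg, abs_of_neg hneg] at *
    field_simp
    ring
  · rw [Real.sign_of_pos hpos, abs_of_pos hpos] at *
    field_simp
    ring
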